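/- For any integer n, the group H_{−1,n} = ⟨x,y,z ∣ x = [x^{−1},z^n][y,z]⟩ is isomorphic to the free group on two generators. -/

import Mathlib

/-- The commutator convention of the paper: `[a,b] = a⁻¹ b⁻¹ a b`. -/
def cmt {G : Type*} [Group G] (a b : G) : G := a⁻¹ * b⁻¹ * a * b

/-- Relator set of `H_{m,n} = ⟨x,y,z ∣ x = [x^m,z^n][y,z]⟩` (generators `0 ↦ x`,
`1 ↦ y`, `2 ↦ z`). -/
def Hrels (m n : ℤ) : Set (FreeGroup (Fin 3)) :=
  {(FreeGroup.of 0)⁻¹ *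
    (cmt ((FreeGroup.of 0) ^ m) ((FreeGroup.of 2) ^ n) *
      cmt (FreeGroup.of 1) (FreeGroup.of 2))}

/-- The Baumslag group `H_{m,n}`. -/
def Hmn (m n : ℤ) : Type := PresentedGroup (Hrels m n)

instance (m n : ℤ) : Group (Hmn m n) := by unfold Hmn; infer_instance

/-- `H_{-1,n}` is isomorphic to the free group on two generators. -/
theorem stmt_6 (n : ℤ) : Nonempty (Hmn (-1) n ≃* FreeGroup (Fin 2)) := by
  unfold Hmn
  set a : FreeGroup (Fin 2) := FreeGroup.of 0 with ha
  set b : FreeGroup (Fin 2) := FreeGroup.of 1 with hb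
  set f : Fin 3 → FreeGroup (Fin 2) := ![b ^ n * a⁻¹ * b⁻¹ * a * b ^ (1 - n), a, b] with hfdef
  have hf : ∀ r ∈ Hrels (-1) n, FreeGroup.lift f r = 1 := by
    intro r hr
    rw [Hrels, Set.mem_singleton_iff] at hr
    subst hr
    simp only [cmt, map_mul, map_inv, map_zpow, FreeGroup.lift_apply_of, hfdef,
      Matrix.cons_val_zero, Matrix.cons_val_one, Matrix.head_cons,
      Matrix.cons_val_two, Matrix.tail_cons]
    group
  let φ : PresentedGroup (Hrels (-1) n) →* FreeGroup (Fin 2) := PresentedGroup.toGroup hf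
  set g : Fin 2 → PresentedGroup (Hrels (-1) n) :=
    ![PresentedGroup.of 1, PresentedGroup.of 2] with hgdef
  let ψ : FreeGroup (Fin 2) →* PresentedGroup (Hrels (-1) n) := FreeGroup.lift g
  set X : PresentedGroup (Hrels (-1) n) := PresentedGroup.of 0 with hX
  set Y : PresentedGroup (Hrels (-1) n) := PresentedGroup.of 1 with hY
  set Z : PresentedGroup (Hrels (-1) n) := PresentedGroup.of 2 with hZ
  have hrel : X⁻¹ * (cmt (X ^ (-1 : ℤ)) (Z ^ n) * cmt Y Z) = 1 := by
    have hmem : ((FreeGroup.of 0)⁻¹ *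
        (cmt ((FreeGroup.of 0) ^ (-1 : ℤ)) ((FreeGroup.of 2) ^ n) *
          cmt (FreeGroup.of 1) (FreeGroup.of 2)) : FreeGroup (Fin 3)) ∈
        Subgroup.normalClosure (Hrels (-1) n) :=
      Subgroup.subset_normalClosure rfl
    have := (QuotientGroup.eq_one_iff _).mpr hmem
    simp only [cmt, QuotientGroup.mk_mul, QuotientGroup.mk_inv, QuotientGroup.mk_zpow, map_mul, map_inv, map_zpow] at this
    exact this
  have key : Z ^ n * Y⁻¹ * Z⁻¹ * Y * Z ^ (1 - n) = X := by
    have h2 : X⁻¹ * (Z ^ n * Y⁻¹ * Z⁻¹ * Y * Z ^ (1 - n)) =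
        Z ^ n * (X⁻¹ * (cmt (X ^ (-1 : ℤ)) (Z ^ n) * cmt Y Z)) * Z ^ (-n) := by
      simp only [cmt]; group
    rw [hrel, mul_one, ← zpow_add, add_neg_cancel, zpow_zero] at h2
    exact (inv_mul_eq_one.mp h2).symm
  have hφψ : φ.comp ψ = MonoidHom.id _ := by
    ext i
    fin_cases i <;>
      simp [ψ, φ, g, f, PresentedGroup.toGroup.of, ha, hb]
  have hψφ' : (ψ.comp φ) = MonoidHom.id _ := by
    apply PresentedGroup.ext
    intro x
    fin_cases x
    · show FreeGroup.lift g (PresentedGroup.toGroup hf X) = X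
      rw [hX, PresentedGroup.toGroup.of]
      simp only [hfdef, Matrix.cons_val_zero, map_mul, map_inv, map_zpow,
        FreeGroup.lift_apply_of, ha, hb, hgdef, Matrix.cons_val_one, Matrix.head_cons]
      exact key
    · show FreeGroup.lift g (PresentedGroup.toGroup hf Y) = Y
      rw [hY, PresentedGroup.toGroup.of]
      simp [hfdef, hgdef, ha, hY]
    · show FreeGroup.lift g (PresentedGroup.toGroup hf Z) = Z
      rw [hZ, PresentedGroup.toGroup.of]
      simp [hfdef, hgdef, hb, hZ]
  exact ⟨MonoidHom.toMulEquiv φ ψ hψφ' hφψ⟩
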